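/- Fix θ ≥ 0 and δ > 0. There exists h₀ > 0 such that if H is any constant function with H ≥ h₀ then P{ω ∈ Ω : for infinitely many N there exists m ≥ ζ_N^H with |(Σ_{n=N+1}^{N+m} Y_n(θ)(ω))/(Σ_{n=N+1}^{N+m} Z_n(θ)(ω)) − E(Y_1(θ))/E(Z_1(θ))| > δ} = 0. The same statement holds with Y_n'(θ), Z_n'(θ) in place of Y_n(θ), Z_n(θ). -/

import Mathlib

open MeasureTheory ProbabilityTheory Filter Set Metric
open scoped ENNReal NNReal

noncomputable section

/-- The step-`v.length` Moran interval determined by the digit string `v`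
(`false` = left child, `true` = right child), where `a n`, `b n` are the scaling
ratios used at step `n` (`n ≥ 1`).  The auxiliary version tracks the current step,
left endpoint and length. -/
def moranAux (a b : ℕ → ℝ) : ℕ → ℝ → ℝ → List Bool → Set ℝ
  | _, l, len, [] => Set.Icc l (l + len)
  | n, l, len, c :: v =>
    if c then moranAux a b (n + 1) (l + len - b (n + 1) * len) (b (n + 1) * len) v
    else moranAux a b (n + 1) l (a (n + 1) * len) v

def moranInt (a b : ℕ → ℝ) (v : List Bool) : Set ℝ := moranAux a b 0 0 1 v

/-- The length `|I_v|` of the Moran interval with digit string `v`. -/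
def moranLenAux (a b : ℕ → ℝ) : ℕ → ℝ → List Bool → ℝ
  | _, len, [] => len
  | n, len, c :: v => moranLenAux a b (n + 1) ((if c then b (n + 1) else a (n + 1)) * len) v

def moranLen (a b : ℕ → ℝ) (v : List Bool) : ℝ := moranLenAux a b 0 1 v

/-- The mass `μ_ω(I_v)` assigned to the Moran interval with digit string `v`. -/
def moranMassAux (p : ℕ → ℝ) : ℕ → ℝ → List Bool → ℝ
  | _, m, [] => m
  | n, m, c :: v => moranMassAux p (n + 1) ((if c then 1 - p (n + 1) else p (n + 1)) * m) v

def moranMass (p : ℕ → ℝ) (v : List Bool) : ℝ := moranMassAux p 0 1 v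

/-- The Moran set `C_ω = ⋂ₙ C_ω^{(n)}`. -/
def moranSet (a b : ℕ → ℝ) : Set ℝ :=
  ⋂ n : ℕ, ⋃ v ∈ {v : List Bool | v.length = n}, moranInt a b v

/-- The (topological) support of a measure on `ℝ`. -/
def measSupport (μ : Measure ℝ) : Set ℝ := {x : ℝ | ∀ r : ℝ, 0 < r → 0 < μ (ball x r)}

/-- A dimension function: `Φ : (0,1) → ℝ⁺` with `t ^ (1 + Φ t)` decreasing to `0`
as `t` decreases to `0`. -/
def DimensionFunction (Φ : ℝ → ℝ) : Prop :=
  (∀ t, t ∈ Ioo (0:ℝ) 1 → 0 ≤ Φ t) ∧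
  (∀ s t, s ∈ Ioo (0:ℝ) 1 → t ∈ Ioo (0:ℝ) 1 → s ≤ t → s ^ (1 + Φ s) ≤ t ^ (1 + Φ t)) ∧
  Tendsto (fun t : ℝ => t ^ (1 + Φ t)) (nhdsWithin 0 (Ioi 0)) (nhds 0)

/-- A large dimension function: `Φ(t) = H(t)·log|log t|/|log t|` with `H(t) → ∞` as `t → 0⁺`. -/
def LargeDimFn (Φ : ℝ → ℝ) : Prop :=
  DimensionFunction Φ ∧
  ∃ H : ℝ → ℝ, (∀ t, t ∈ Ioo (0:ℝ) 1 → Φ t = H t * Real.log |Real.log t| / |Real.log t|) ∧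
    Tendsto H (nhdsWithin 0 (Ioi 0)) atTop

/-- A small dimension function: `Φ(t) = H(t)·log|log t|/|log t|` with `H(t) → 0` as `t → 0⁺`. -/
def SmallDimFn (Φ : ℝ → ℝ) : Prop :=
  DimensionFunction Φ ∧
  ∃ H : ℝ → ℝ, (∀ t, t ∈ Ioo (0:ℝ) 1 → Φ t = H t * Real.log |Real.log t| / |Real.log t|) ∧
    Tendsto H (nhdsWithin 0 (Ioi 0)) (nhds 0)

/-- `d` is admissible for the upper `Φ`-dimension of `μ`: there are `C₁, C₂ > 0` with
`μ(B(x,R)) ≤ C₂ (R/r)^d μ(B(x,r))` for all `x ∈ supp μ` and `0 < r < R^{1+Φ(R)} ≤ R ≤ C₁`. -/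
def upperDimAdmissible (Φ : ℝ → ℝ) (μ : Measure ℝ) (d : ℝ) : Prop :=
  ∃ C₁ > (0:ℝ), ∃ C₂ > (0:ℝ), ∀ x ∈ measSupport μ, ∀ R r : ℝ,
    0 < r → r < R ^ (1 + Φ R) → R ^ (1 + Φ R) ≤ R → R ≤ C₁ →
    μ (ball x R) ≤ ENNReal.ofReal (C₂ * (R / r) ^ d) * μ (ball x r)

/-- The upper `Φ`-dimension of a measure `μ`. -/
noncomputable def upperPhiDim (Φ : ℝ → ℝ) (μ : Measure ℝ) : ℝ≥0∞ :=
  ⨅ (d : ℝ) (_ : upperDimAdmissible Φ μ d), ENNReal.ofReal d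

/-- `d` is admissible for the lower `Φ`-dimension of `μ`. -/
def lowerDimAdmissible (Φ : ℝ → ℝ) (μ : Measure ℝ) (d : ℝ) : Prop :=
  ∃ C₁ > (0:ℝ), ∃ C₂ > (0:ℝ), ∀ x ∈ measSupport μ, ∀ R r : ℝ,
    0 < r → r < R ^ (1 + Φ R) → R ^ (1 + Φ R) ≤ R → R ≤ C₁ →
    ENNReal.ofReal (C₂ * (R / r) ^ d) * μ (ball x r) ≤ μ (ball x R)

/-- The lower `Φ`-dimension of a measure `μ`. -/
noncomputable def lowerPhiDim (Φ : ℝ → ℝ) (μ : Measure ℝ) : ℝ≥0∞ :=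
  ⨆ (d : ℝ) (_ : lowerDimAdmissible Φ μ d), ENNReal.ofReal d

/-- The upper quasi-Assouad dimension `dim_qA μ = lim_{θ→1⁻} dim̄_{Φ_θ} μ`, where
`Φ_θ = 1/θ - 1`; by monotonicity the limit is the supremum over `θ ∈ (0,1)`. -/
noncomputable def qADim (μ : Measure ℝ) : ℝ≥0∞ :=
  ⨆ (θ : ℝ) (_ : θ ∈ Ioo (0:ℝ) 1), upperPhiDim (fun _ => 1 / θ - 1) μ

/-- The upper local dimension `limsup_{r→0⁺} log μ(B(x,r)) / log r`. -/
noncomputable def upperLocalDim (μ : Measure ℝ) (x : ℝ) : ℝ≥0∞ :=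
  Filter.limsup (fun r : ℝ => ENNReal.ofReal (Real.log ((μ (ball x r)).toReal) / Real.log r))
    (nhdsWithin 0 (Ioi 0))

/-- The lower local dimension `liminf_{r→0⁺} log μ(B(x,r)) / log r`. -/
noncomputable def lowerLocalDim (μ : Measure ℝ) (x : ℝ) : ℝ≥0∞ :=
  Filter.liminf (fun r : ℝ => ENNReal.ofReal (Real.log ((μ (ball x r)).toReal) / Real.log r))
    (nhdsWithin 0 (Ioi 0))

/-- `μ` is the random Moran measure determined by the scaling data `a, b` and
probability data `p`: a Borel probability measure supported on the Moran set whose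
value on each Moran interval is the prescribed mass. -/
def IsMoranMeasure (a b p : ℕ → ℝ) (μ : Measure ℝ) : Prop :=
  IsProbabilityMeasure μ ∧ measSupport μ = moranSet a b ∧
    ∀ v : List Bool, μ (moranInt a b v) = ENNReal.ofReal (moranMass p v)

/-- The random variable `Y_n(θ)`. -/
def Yrv {Ω : Type*} (a b p : Ω → ℕ → ℝ) (θ : ℝ) (n : ℕ) (ω : Ω) : ℝ :=
  if p ω n ≤ a ω n ^ θ / (a ω n ^ θ + b ω n ^ θ) then Real.log (p ω n)
  else Real.log (1 - p ω n)

/-- The random variable `Z_n(θ)`. -/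
def Zrv {Ω : Type*} (a b p : Ω → ℕ → ℝ) (θ : ℝ) (n : ℕ) (ω : Ω) : ℝ :=
  if p ω n ≤ a ω n ^ θ / (a ω n ^ θ + b ω n ^ θ) then Real.log (a ω n)
  else Real.log (b ω n)

/-- The random variable `Y_n'(θ)` (the two cases interchanged). -/
def Yrv' {Ω : Type*} (a b p : Ω → ℕ → ℝ) (θ : ℝ) (n : ℕ) (ω : Ω) : ℝ :=
  if a ω n ^ θ / (a ω n ^ θ + b ω n ^ θ) ≤ p ω n then Real.log (p ω n)
  else Real.log (1 - p ω n)

/-- The random variable `Z_n'(θ)` (the two cases interchanged). -/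
def Zrv' {Ω : Type*} (a b p : Ω → ℕ → ℝ) (θ : ℝ) (n : ℕ) (ω : Ω) : ℝ :=
  if a ω n ^ θ / (a ω n ^ θ + b ω n ^ θ) ≤ p ω n then Real.log (a ω n)
  else Real.log (b ω n)

/-- `G(θ) = E(Y₁(θ)) / E(Z₁(θ))`. -/
noncomputable def Gfn {Ω : Type*} [MeasurableSpace Ω] (P : Measure Ω)
    (a b p : Ω → ℕ → ℝ) (θ : ℝ) : ℝ :=
  (∫ ω, Yrv a b p θ 1 ω ∂P) / (∫ ω, Zrv a b p θ 1 ω ∂P)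

/-- `G'(θ) = E(Y₁'(θ)) / E(Z₁'(θ))`. -/
noncomputable def Gfn' {Ω : Type*} [MeasurableSpace Ω] (P : Measure Ω)
    (a b p : Ω → ℕ → ℝ) (θ : ℝ) : ℝ :=
  (∫ ω, Yrv' a b p θ 1 ω ∂P) / (∫ ω, Zrv' a b p θ 1 ω ∂P)

/-- `ζ_N^H = H(B^N)·log(N·|log B|)/|log A|`. -/
noncomputable def zetaNH (A B : ℝ) (H : ℝ → ℝ) (N : ℕ) : ℝ :=
  H (B ^ N) * Real.log (N * |Real.log B|) / |Real.log A|

/-- The full random data of the (two-children, one-dimensional) random Moran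
construction: i.i.d. scaling pairs `(aₙ, bₙ)` with values in
`{(x,y) : A ≤ min x y, x + y ≤ B}`, i.i.d. probabilities `pₙ ∈ [0,1]` independent of
the scaling pairs, with negative moments `E(a₁^{-t}), E(b₁^{-t}), E(p₁^{-t}),
E((1-p₁)^{-t}) < ∞` for some `t > 0`. -/
structure MoranSystem (Ω : Type*) [MeasurableSpace Ω] (P : Measure Ω) (A B : ℝ) where
  a : Ω → ℕ → ℝ
  b : Ω → ℕ → ℝ
  p : Ω → ℕ → ℝ
  meas_ab : ∀ n, Measurable fun ω => (a ω n, b ω n)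
  meas_p : ∀ n, Measurable fun ω => p ω n
  range_ab : ∀ ω n, A ≤ min (a ω n) (b ω n) ∧ a ω n + b ω n ≤ B
  range_p : ∀ ω n, p ω n ∈ Icc (0:ℝ) 1
  indep_ab : iIndepFun (fun n ω => (a ω n, b ω n)) P
  ident_ab : ∀ n, IdentDistrib (fun ω => (a ω n, b ω n)) (fun ω => (a ω 1, b ω 1)) P P
  indep_p : iIndepFun (fun n ω => p ω n) P
  ident_p : ∀ n, IdentDistrib (fun ω => p ω n) (fun ω => p ω 1) P P
  indep_ab_p : IndepFun (fun ω (n : ℕ) => (a ω n, b ω n)) (fun ω (n : ℕ) => p ω n) P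
  moment : ∃ t : ℝ, 0 < t ∧ Integrable (fun ω => a ω 1 ^ (-t)) P ∧
    Integrable (fun ω => b ω 1 ^ (-t)) P ∧ Integrable (fun ω => p ω 1 ^ (-t)) P ∧
    Integrable (fun ω => (1 - p ω 1) ^ (-t)) P

/-- The value `α = max(log P₀/log A₀, log Q₀/log B₀)`, understood as `∞` when
`P₀ = 0` or `Q₀ = 0`. -/
noncomputable def alphaVal (P₀ Q₀ A₀ B₀ : ℝ) : ℝ≥0∞ :=
  if P₀ = 0 ∨ Q₀ = 0 then ⊤
  else ENNReal.ofReal (max (Real.log P₀ / Real.log A₀) (Real.log Q₀ / Real.log B₀))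


section AuxProbResult

variable {Ω : Type*} [MeasurableSpace Ω] (P : Measure Ω) [IsProbabilityMeasure P]

lemma integrable_exp_mul_of_le {V : Ω → ℝ} (hVm : Measurable V) {t l : ℝ}
    (hl0 : 0 ≤ l) (hlt : l ≤ t)
    (hexp : Integrable (fun ω => Real.exp (t * V ω)) P) :
    Integrable (fun ω => Real.exp (l * V ω)) P := by
  refine Integrable.mono' (hexp.add (integrable_const 1)) ?_ ?_
  · exact ((hVm.const_mul l).exp).aestronglyMeasurable
  · refine ae_of_all _ fun ω => ?_
    rw [Real.norm_eq_abs, abs_of_pos (Real.exp_pos _)]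
    simp only [Pi.add_apply]
    rcases le_or_gt (V ω) 0 with h | h
    · have h1 : Real.exp (l * V ω) ≤ 1 := by
        rw [Real.exp_le_one_iff]; exact mul_nonpos_of_nonneg_of_nonpos hl0 h
      have h2 := Real.exp_pos (t * V ω)
      linarith
    · have h1 : Real.exp (l * V ω) ≤ Real.exp (t * V ω) := by
        apply Real.exp_le_exp.2; nlinarith
      linarith

/-- Key analytic lemma: small positive `l` gives `mgf V P l < exp (l * (E V + ε))`. -/
lemma exists_mgf_lt {V : Ω → ℝ} (hVm : Measurable V) (hVi : Integrable V P) {t : ℝ} (ht : 0 < t)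
    (hexp : Integrable (fun ω => Real.exp (t * V ω)) P) {ε : ℝ} (hε : 0 < ε) :
    ∃ l : ℝ, 0 < l ∧ Integrable (fun ω => Real.exp (l * V ω)) P ∧
      Real.exp (-(l * ((∫ ω, V ω ∂P) + ε))) * mgf V P l < 1 := by
  set EV := ∫ ω, V ω ∂P with hEV
  have hlim : Tendsto (fun l : ℝ => ∫ ω, (Real.exp (l * V ω) - 1) / l ∂P)
      (nhdsWithin 0 (Ioi 0)) (nhds EV) := by
    apply tendsto_integral_filter_of_dominated_convergence
      (bound := fun ω => |V ω| + (2 / t) * Real.exp (t * V ω))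
    · exact Eventually.of_forall (fun l =>
        (((hVm.const_mul l).exp.sub measurable_const).div_const l).aestronglyMeasurable)
    · filter_upwards [Ioc_mem_nhdsGT_of_mem (⟨le_rfl, by positivity⟩ : (0:ℝ) ∈ Ico 0 (t/2))]
        with l hl
      refine ae_of_all _ fun ω => ?_
      obtain ⟨hl0, hl2⟩ := hl
      set v := V ω with hv
      rw [Real.norm_eq_abs, abs_div, abs_of_pos hl0]
      rcases le_or_gt v 0 with h | h
      · have h2 : 1 + l * v ≤ Real.exp (l * v) := by
          have := Real.add_one_le_exp (l * v); linarith
        have habs : |Real.exp (l * v) - 1| = 1 - Real.exp (l * v) := by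
          have h1 : Real.exp (l * v) ≤ 1 := by
            rw [Real.exp_le_one_iff]; exact mul_nonpos_of_nonneg_of_nonpos hl0.le h
          rw [abs_of_nonpos (by linarith)]; ring
        rw [habs, div_le_iff₀ hl0, abs_of_nonpos h]
        have hterm : 0 ≤ (2/t * Real.exp (t*v)) * l := by positivity
        have expand : (-v + 2/t * Real.exp (t*v)) * l
            = -(l*v) + (2/t * Real.exp (t*v))*l := by ring
        linarith
      · have hep : (0:ℝ) < Real.exp (l * v) := Real.exp_pos _
        have habs : |Real.exp (l * v) - 1| = Real.exp (l * v) - 1 := by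
          rw [abs_of_nonneg]
          have : (1:ℝ) ≤ Real.exp (l*v) := by rw [Real.one_le_exp_iff]; positivity
          linarith
        rw [habs, div_le_iff₀ hl0]
        have key : Real.exp (l * v) - 1 ≤ l * v * Real.exp (l * v) := by
          have hx : 1 - (Real.exp (l*v))⁻¹ ≤ l*v := by
            have := Real.add_one_le_exp (-(l*v)); rw [Real.exp_neg] at this; linarith
          have hmul := mul_le_mul_of_nonneg_right hx hep.le
          have hx2 : (1 - (Real.exp (l*v))⁻¹) * Real.exp (l*v) = Real.exp (l*v) - 1 := by
            field_simp
          linarith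
        have hv2 : v ≤ (2/t) * Real.exp (t/2 * v) := by
          have h3 : (t/2)*v ≤ Real.exp (t/2*v) := by
            have := Real.add_one_le_exp (t/2*v); linarith
          have h2t : (0:ℝ) < 2/t := by positivity
          have := mul_le_mul_of_nonneg_left h3 h2t.le
          calc v = (2/t)*((t/2)*v) := by field_simp
            _ ≤ (2/t) * Real.exp (t/2*v) := this
        have hmono : Real.exp (l * v) ≤ Real.exp (t/2 * v) := by
          apply Real.exp_le_exp.2; nlinarith
        have hee : Real.exp (t/2*v) * Real.exp (t/2*v) = Real.exp (t*v) := by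
          rw [← Real.exp_add]; ring_nf
        have hchain : v * Real.exp (l*v) ≤ (2/t) * Real.exp (t*v) := by
          calc v * Real.exp (l*v) ≤ ((2/t) * Real.exp (t/2*v)) * Real.exp (t/2*v) :=
                mul_le_mul hv2 hmono (Real.exp_pos _).le (by positivity)
            _ = (2/t) * Real.exp (t*v) := by rw [mul_assoc, hee]
        have c1 : l * (v * Real.exp (l*v)) ≤ l * ((2/t) * Real.exp (t*v)) :=
          mul_le_mul_of_nonneg_left hchain hl0.le
        have c2 : l*v*Real.exp (l*v) = l * (v * Real.exp (l*v)) := by ring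
        have c3 : 0 ≤ |v| * l := by positivity
        have expand2 : (|v| + 2/t * Real.exp (t*v)) * l
            = |v| * l + l*((2/t)*Real.exp (t*v)) := by ring
        linarith
    · exact (hVi.abs).add (hexp.const_mul _)
    · refine ae_of_all _ fun ω => ?_
      have hd : HasDerivAt (fun l : ℝ => Real.exp (l * V ω)) (V ω) 0 := by
        have h1 : HasDerivAt (fun l : ℝ => l * V ω) (V ω) 0 := hasDerivAt_mul_const _
        simpa using h1.exp
      have h2 := hasDerivAt_iff_tendsto_slope.1 hd
      have hsub : nhdsWithin (0:ℝ) (Ioi 0) ≤ nhdsWithin 0 {(0:ℝ)}ᶜ :=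
        nhdsWithin_mono _ (fun x hx => ne_of_gt hx)
      refine (h2.mono_left hsub).congr' ?_
      filter_upwards [self_mem_nhdsWithin] with l hl
      simp [slope_def_field]
  have hev : ∀ᶠ l in nhdsWithin (0:ℝ) (Ioi 0),
      (∫ ω, (Real.exp (l * V ω) - 1) / l ∂P) < EV + ε :=
    hlim.eventually_lt_const (by linarith)
  have hmem : ∀ᶠ l in nhdsWithin (0:ℝ) (Ioi 0), l ∈ Ioc (0:ℝ) t :=
    Ioc_mem_nhdsGT_of_mem (⟨le_rfl, ht⟩ : (0:ℝ) ∈ Ico 0 t)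
  obtain ⟨l, hl1, hl0, hlt⟩ := (hev.and hmem).exists
  have hint : Integrable (fun ω => Real.exp (l * V ω)) P :=
    integrable_exp_mul_of_le P hVm hl0.le hlt hexp
  refine ⟨l, hl0, hint, ?_⟩
  have hcalc : ∫ ω, (Real.exp (l * V ω) - 1) / l ∂P = (mgf V P l - 1) / l := by
    rw [integral_div]
    congr 1
    rw [integral_sub hint (integrable_const 1)]
    simp [mgf]
  rw [hcalc] at hl1
  have hmgf : mgf V P l < 1 + l * (EV + ε) := by
    rw [div_lt_iff₀ hl0] at hl1; nlinarith
  have hexp1 : 1 + l * (EV + ε) ≤ Real.exp (l * (EV + ε)) := by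
    have := Real.add_one_le_exp (l * (EV + ε)); linarith
  have h2 : mgf V P l < Real.exp (l * (EV + ε)) := lt_of_lt_of_le hmgf hexp1
  calc Real.exp (-(l * (EV + ε))) * mgf V P l
      < Real.exp (-(l * (EV + ε))) * Real.exp (l * (EV + ε)) :=
        mul_lt_mul_of_pos_left h2 (Real.exp_pos _)
    _ = 1 := by rw [← Real.exp_add]; simp


lemma chernoff_icc {V : ℕ → Ω → ℝ} (hind : iIndepFun V P)
    (hmeas : ∀ n, Measurable (V n)) (hid : ∀ n, IdentDistrib (V n) (V 1) P P)
    {l c : ℝ} (hl : 0 < l) (hint : Integrable (fun ω => Real.exp (l * V 1 ω)) P)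
    (N m : ℕ) :
    P {ω | (m : ℝ) * c ≤ ∑ n ∈ Finset.Icc (N + 1) (N + m), V n ω}
      ≤ ENNReal.ofReal ((Real.exp (-(l * c)) * mgf (V 1) P l) ^ m) := by
  have hexpmeas : Measurable fun x : ℝ => Real.exp (l * x) :=
    (measurable_id.const_mul l).exp
  have hident : ∀ n, IdentDistrib (fun ω => Real.exp (l * V n ω))
      (fun ω => Real.exp (l * V 1 ω)) P P := fun n => (hid n).comp hexpmeas
  have hintn : ∀ n, Integrable (fun ω => Real.exp (l * V n ω)) P := fun n =>
    (hident n).integrable_iff.2 hint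
  have hmgf_eq : ∀ n, mgf (V n) P l = mgf (V 1) P l := fun n => (hident n).integral_eq
  set X : Ω → ℝ := ∑ n ∈ Finset.Icc (N + 1) (N + m), V n with hX
  have hcard : (Finset.Icc (N + 1) (N + m)).card = m := by
    rw [Nat.card_Icc]; omega
  have hintX : Integrable (fun ω => Real.exp (l * X ω)) P :=
    hind.integrable_exp_mul_sum hmeas (fun i _ => hintn i)
  have hbound := measure_ge_le_exp_mul_mgf (X := X) (μ := P) ((m : ℝ) * c) hl.le hintX
  have hmgfX : mgf X P l = (mgf (V 1) P l) ^ m := by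
    rw [hX, hind.mgf_sum hmeas]
    rw [Finset.prod_congr rfl (fun n _ => hmgf_eq n), Finset.prod_const, hcard]
  have hset : {ω | (m : ℝ) * c ≤ ∑ n ∈ Finset.Icc (N + 1) (N + m), V n ω}
      = {ω | (m : ℝ) * c ≤ X ω} := by
    ext ω; simp [hX]
  rw [hset]
  have hne : P {ω | (m : ℝ) * c ≤ X ω} ≠ ⊤ := measure_ne_top _ _
  rw [← ENNReal.ofReal_toReal hne]
  apply ENNReal.ofReal_le_ofReal
  refine hbound.trans ?_
  rw [hmgfX]
  have : Real.exp (-l * ((m:ℝ) * c)) = Real.exp (-(l * c)) ^ m := by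
    rw [← Real.exp_nat_mul]; ring_nf
  rw [this, mul_pow]

lemma dev_cases {sy sz ey ez ε δ c₁ c₂ : ℝ} {m : ℕ}
    (hc₁ : 0 < c₁) (hm : 0 < (m:ℝ))
    (hsz : sz ≤ -(c₁ * m)) (hez : ez ≤ -c₁) (hez₂ : -c₂ ≤ ez)
    (hεle : ε * (c₂ + |ey|) ≤ δ * (c₁ * c₁))
    (hy : |sy - m * ey| < ε * m) (hz : |sz - m * ez| < ε * m) :
    |sy / sz - ey / ez| ≤ δ := by
  have hsz0 : sz ≠ 0 := by nlinarith
  have hez0 : ez ≠ 0 := by nlinarith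
  have habs_sz : c₁ * m ≤ |sz| := by
    rw [abs_of_nonpos (by nlinarith)]; linarith
  have habs_ez : c₁ ≤ |ez| := by
    rw [abs_of_nonpos (by nlinarith)]; linarith
  have habs_ez2 : |ez| ≤ c₂ := by
    rw [abs_of_nonpos (by nlinarith)]; linarith
  have hc₂ : 0 < c₂ := lt_of_lt_of_le hc₁ (habs_ez.trans habs_ez2)
  rw [div_sub_div _ _ hsz0 hez0, abs_div]
  have hden : c₁ * m * c₁ ≤ |sz * ez| := by
    rw [abs_mul]
    calc c₁ * m * c₁ ≤ |sz| * c₁ := by nlinarith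
      _ ≤ |sz| * |ez| := by nlinarith [abs_nonneg sz]
  have hnum : |sy * ez - sz * ey| ≤ ε * m * (c₂ + |ey|) := by
    have hid : sy * ez - sz * ey = (sy - m * ey) * ez - (sz - m * ez) * ey := by ring
    rw [hid]
    calc |(sy - m * ey) * ez - (sz - m * ez) * ey|
        ≤ |(sy - m * ey) * ez| + |(sz - m * ez) * ey| := abs_sub _ _
      _ = |sy - m * ey| * |ez| + |sz - m * ez| * |ey| := by rw [abs_mul, abs_mul]
      _ ≤ (ε * m) * c₂ + (ε * m) * |ey| := by
          have h1 : |sy - m * ey| * |ez| ≤ (ε * m) * c₂ := by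
            apply mul_le_mul hy.le habs_ez2 (abs_nonneg _) (by nlinarith [abs_nonneg (sy - m*ey)])
          have h2 : |sz - m * ez| * |ey| ≤ (ε * m) * |ey| := by
            apply mul_le_mul_of_nonneg_right hz.le (abs_nonneg _)
          linarith
      _ = ε * m * (c₂ + |ey|) := by ring
  have hdpos : 0 < c₁ * m * c₁ := by positivity
  rw [div_le_iff₀ (lt_of_lt_of_le hdpos hden)]
  have hε0 : 0 ≤ ε := by
    nlinarith [abs_nonneg (sy - m * ey)]
  calc |sy * ez - sz * ey| ≤ ε * m * (c₂ + |ey|) := hnum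
    _ ≤ δ * (c₁ * c₁) * m := by nlinarith
    _ ≤ δ * |sz * ez| := by
        have hδ0 : 0 ≤ δ := by nlinarith [abs_nonneg ey, mul_nonneg hε0 (by positivity : (0:ℝ) ≤ c₂ + |ey|), mul_pos hc₁ hc₁]
        calc δ * (c₁ * c₁) * m = δ * (c₁ * m * c₁) := by ring
          _ ≤ δ * |sz * ez| := by nlinarith



lemma tail_geom_bound {σ : ℝ} (hσ0 : 0 ≤ σ) (hσ1 : σ < 1) {ζ : ℝ} :
    ∑' m : ℕ, (if ζ ≤ (m : ℝ) then ENNReal.ofReal (4 * (σ * σ) ^ m) else 0)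
      ≤ ENNReal.ofReal (4 * σ ^ ⌈ζ⌉₊ * (1 - σ)⁻¹) := by
  have hpt : ∀ m : ℕ, (if ζ ≤ (m : ℝ) then ENNReal.ofReal (4 * (σ * σ) ^ m) else 0)
      ≤ ENNReal.ofReal (4 * σ ^ ⌈ζ⌉₊) * ENNReal.ofReal (σ ^ m) := by
    intro m
    split_ifs with hc
    · have hMm : ⌈ζ⌉₊ ≤ m := Nat.ceil_le.2 hc
      have h1 : σ ^ m ≤ σ ^ ⌈ζ⌉₊ := pow_le_pow_of_le_one hσ0 hσ1.le hMm
      rw [← ENNReal.ofReal_mul (by positivity)]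
      apply ENNReal.ofReal_le_ofReal
      have : (σ * σ) ^ m = σ ^ m * σ ^ m := by rw [mul_pow]
      rw [this]
      calc 4 * (σ ^ m * σ ^ m) ≤ 4 * (σ ^ ⌈ζ⌉₊ * σ ^ m) := by
            have := mul_le_mul_of_nonneg_right h1 (pow_nonneg hσ0 m)
            nlinarith
        _ = 4 * σ ^ ⌈ζ⌉₊ * σ ^ m := by ring
    · exact zero_le
  calc ∑' m : ℕ, (if ζ ≤ (m : ℝ) then ENNReal.ofReal (4 * (σ * σ) ^ m) else 0)
      ≤ ∑' m : ℕ, ENNReal.ofReal (4 * σ ^ ⌈ζ⌉₊) * ENNReal.ofReal (σ ^ m) :=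
        ENNReal.tsum_le_tsum hpt
    _ = ENNReal.ofReal (4 * σ ^ ⌈ζ⌉₊) * ∑' m : ℕ, ENNReal.ofReal (σ ^ m) :=
        ENNReal.tsum_mul_left
    _ = ENNReal.ofReal (4 * σ ^ ⌈ζ⌉₊) * ENNReal.ofReal ((1 - σ)⁻¹) := by
        rw [← ENNReal.ofReal_tsum_of_nonneg (fun m => pow_nonneg hσ0 m)
          (summable_geometric_of_lt_one hσ0 hσ1), tsum_geometric_of_lt_one hσ0 hσ1]
    _ = ENNReal.ofReal (4 * σ ^ ⌈ζ⌉₊ * (1 - σ)⁻¹) := by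
        rw [← ENNReal.ofReal_mul (by positivity)]



set_option maxHeartbeats 1600000 in
lemma master (A B : ℝ) (hA : 0 < A) (hAB : A < B) (hB1 : B < 1)
    (Y Z : ℕ → Ω → ℝ)
    (hYind : iIndepFun Y P)
    (hZind : iIndepFun Z P)
    (hYmeas : ∀ n, Measurable (Y n)) (hZmeas : ∀ n, Measurable (Z n))
    (hYid : ∀ n, IdentDistrib (Y n) (Y 1) P P) (hZid : ∀ n, IdentDistrib (Z n) (Z 1) P P)
    (hYnp : ∀ n ω, Y n ω ≤ 0)
    (hZub : ∀ n ω, Z n ω ≤ Real.log (B - A)) (hZlb : ∀ n ω, Real.log A ≤ Z n ω)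
    (hmom : ∃ t : ℝ, 0 < t ∧ Integrable (fun ω => Real.exp (t * -(Y 1 ω))) P)
    (δ : ℝ) (hδ : 0 < δ) :
    ∃ h₀ > (0:ℝ), ∀ h : ℝ, h₀ ≤ h →
      P {ω | {N : ℕ | ∃ m : ℕ, zetaNH A B (fun _ => h) N ≤ (m : ℝ) ∧
        δ < |(∑ n ∈ Finset.Icc (N + 1) (N + m), Y n ω) /
              (∑ n ∈ Finset.Icc (N + 1) (N + m), Z n ω) -
            (∫ ω, Y 1 ω ∂P) / (∫ ω, Z 1 ω ∂P)|}.Infinite} = 0 := by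
  obtain ⟨t, ht0, hexpY⟩ := hmom
  have hB0 : 0 < B := lt_trans hA hAB
  have hBA0 : 0 < B - A := by linarith
  have hBA1 : B - A < 1 := by linarith
  have hA1 : A < 1 := by linarith
  have hlogBA : Real.log (B - A) < 0 := Real.log_neg hBA0 hBA1
  have hlogA : Real.log A < 0 := Real.log_neg hA hA1
  have hlogB : Real.log B < 0 := Real.log_neg hB0 hB1
  set c₁ : ℝ := -Real.log (B - A) with hc₁def
  set c₂ : ℝ := -Real.log A with hc₂def
  have hc₁ : 0 < c₁ := by simp [hc₁def]; linarith
  have hc₂ : 0 < c₂ := by simp [hc₂def]; linarith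
  -- integrability
  have hYint : Integrable (Y 1) P := by
    refine Integrable.mono' (hexpY.const_mul (1/t)) (hYmeas 1).aestronglyMeasurable ?_
    refine ae_of_all _ fun ω => ?_
    rw [Real.norm_eq_abs, abs_of_nonpos (hYnp 1 ω)]
    have h1 := Real.add_one_le_exp (t * -(Y 1 ω))
    have h2 : t * -(Y 1 ω) ≤ Real.exp (t * -(Y 1 ω)) := by linarith
    rw [div_mul_eq_mul_div, one_mul, le_div_iff₀ ht0]
    linarith [mul_comm (Real.exp (t * -(Y 1 ω))) t, h2]
  have hZbd : ∀ n ω, |Z n ω| ≤ c₂ := by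
    intro n ω
    have h1 := hZub n ω; have h2 := hZlb n ω
    rw [abs_of_nonpos (by linarith)]
    simp [hc₂def]; linarith
  have hZint : Integrable (Z 1) P := by
    refine Integrable.mono' (integrable_const c₂) (hZmeas 1).aestronglyMeasurable ?_
    exact ae_of_all _ fun ω => by rw [Real.norm_eq_abs]; exact hZbd 1 ω
  set EY : ℝ := ∫ ω, Y 1 ω ∂P with hEYdef
  set EZ : ℝ := ∫ ω, Z 1 ω ∂P with hEZdef
  have hEZub : EZ ≤ -c₁ := by
    rw [hEZdef]
    calc ∫ ω, Z 1 ω ∂P ≤ ∫ _ω, Real.log (B - A) ∂P :=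
          integral_mono hZint (integrable_const _) (fun ω => hZub 1 ω)
      _ = Real.log (B - A) := by simp
      _ = -c₁ := by simp [hc₁def]
  have hEZlb : -c₂ ≤ EZ := by
    rw [hEZdef]
    calc -c₂ = Real.log A := by simp [hc₂def]
      _ = ∫ _ω, Real.log A ∂P := by simp
      _ ≤ ∫ ω, Z 1 ω ∂P := integral_mono (integrable_const _) hZint (fun ω => hZlb 1 ω)
  set ε : ℝ := δ * (c₁ * c₁) / (c₂ + |EY| + 1) with hεdef
  have hε : 0 < ε := by
    apply div_pos (by positivity)
    positivity
  have hεle : ε * (c₂ + |EY|) ≤ δ * (c₁ * c₁) := by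
    rw [hεdef, div_mul_eq_mul_div, div_le_iff₀ (by positivity)]
    have h1 : (0:ℝ) ≤ δ * (c₁ * c₁) := by positivity
    nlinarith [abs_nonneg EY]
  -- Chernoff ingredients
  have hexpY1 : Integrable (fun ω => Real.exp (1 * Y 1 ω)) P := by
    refine Integrable.mono' (integrable_const 1)
      ((hYmeas 1).const_mul 1).exp.aestronglyMeasurable ?_
    refine ae_of_all _ fun ω => ?_
    rw [Real.norm_eq_abs, abs_of_pos (Real.exp_pos _), one_mul, Real.exp_le_one_iff]
    exact hYnp 1 ω
  obtain ⟨l₁, hl₁, hint₁, hρ₁⟩ := exists_mgf_lt P (hYmeas 1) hYint one_pos hexpY1 hε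
  set Ym : ℕ → Ω → ℝ := fun n ω => -(Y n ω) with hYm
  have hYmmeas : ∀ n, Measurable (Ym n) := fun n => (hYmeas n).neg
  have hYmind : iIndepFun Ym P :=
    hYind.comp (fun _ => Neg.neg) (fun _ => measurable_neg)
  have hYmid : ∀ n, IdentDistrib (Ym n) (Ym 1) P P := fun n => (hYid n).comp measurable_neg
  have hYmint : Integrable (Ym 1) P := hYint.neg
  have hexpYm : Integrable (fun ω => Real.exp (t * Ym 1 ω)) P := hexpY
  obtain ⟨l₂, hl₂, hint₂, hρ₂⟩ := exists_mgf_lt P (hYmmeas 1) hYmint ht0 hexpYm hε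
  have hexpZ1 : Integrable (fun ω => Real.exp (1 * Z 1 ω)) P := by
    refine Integrable.mono' (integrable_const 1)
      ((hZmeas 1).const_mul 1).exp.aestronglyMeasurable ?_
    refine ae_of_all _ fun ω => ?_
    rw [Real.norm_eq_abs, abs_of_pos (Real.exp_pos _), one_mul, Real.exp_le_one_iff]
    have := hZub 1 ω; linarith
  obtain ⟨l₃, hl₃, hint₃, hρ₃⟩ := exists_mgf_lt P (hZmeas 1) hZint one_pos hexpZ1 hε
  set Zm : ℕ → Ω → ℝ := fun n ω => -(Z n ω) with hZm
  have hZmmeas : ∀ n, Measurable (Zm n) := fun n => (hZmeas n).neg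
  have hZmind : iIndepFun Zm P :=
    hZind.comp (fun _ => Neg.neg) (fun _ => measurable_neg)
  have hZmid : ∀ n, IdentDistrib (Zm n) (Zm 1) P P := fun n => (hZid n).comp measurable_neg
  have hZmint : Integrable (Zm 1) P := hZint.neg
  have hexpZm : Integrable (fun ω => Real.exp (1 * Zm 1 ω)) P := by
    refine Integrable.mono' (integrable_const (Real.exp c₂))
      ((hZmmeas 1).const_mul 1).exp.aestronglyMeasurable ?_
    refine ae_of_all _ fun ω => ?_
    rw [Real.norm_eq_abs, abs_of_pos (Real.exp_pos _), one_mul, Real.exp_le_exp]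
    have := hZbd 1 ω
    have := neg_abs_le (Z 1 ω)
    simp only [hZm]
    linarith [abs_le.1 (hZbd 1 ω) |>.1]
  obtain ⟨l₄, hl₄, hint₄, hρ₄⟩ := exists_mgf_lt P (hZmmeas 1) hZmint one_pos hexpZm hε
  -- the four geometric ratios
  set r₁ : ℝ := Real.exp (-(l₁ * (EY + ε))) * mgf (Y 1) P l₁ with hr₁
  set r₂ : ℝ := Real.exp (-(l₂ * ((∫ ω, Ym 1 ω ∂P) + ε))) * mgf (Ym 1) P l₂ with hr₂
  set r₃ : ℝ := Real.exp (-(l₃ * (EZ + ε))) * mgf (Z 1) P l₃ with hr₃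
  set r₄ : ℝ := Real.exp (-(l₄ * ((∫ ω, Zm 1 ω ∂P) + ε))) * mgf (Zm 1) P l₄ with hr₄
  have hr₁0 : 0 < r₁ := mul_pos (Real.exp_pos _) (mgf_pos hint₁)
  have hr₁n : 0 ≤ r₁ := hr₁0.le
  have hr₂n : 0 ≤ r₂ := mul_nonneg (Real.exp_pos _).le mgf_nonneg
  have hr₃n : 0 ≤ r₃ := mul_nonneg (Real.exp_pos _).le mgf_nonneg
  have hr₄n : 0 ≤ r₄ := mul_nonneg (Real.exp_pos _).le mgf_nonneg
  obtain ⟨ρ, hρ0, hρ1, hρr₁, hρr₂, hρr₃, hρr₄⟩ :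
      ∃ ρ : ℝ, 0 < ρ ∧ ρ < 1 ∧ r₁ ≤ ρ ∧ r₂ ≤ ρ ∧ r₃ ≤ ρ ∧ r₄ ≤ ρ := by
    refine ⟨max (max r₁ r₂) (max r₃ r₄),
      lt_of_lt_of_le hr₁0 (le_max_of_le_left (le_max_left _ _)),
      max_lt (max_lt hρ₁ hρ₂) (max_lt hρ₃ hρ₄),
      le_max_of_le_left (le_max_left _ _), le_max_of_le_left (le_max_right _ _),
      le_max_of_le_right (le_max_left _ _), le_max_of_le_right (le_max_right _ _)⟩
  clear_value r₁ r₂ r₃ r₄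
  obtain ⟨σ, hσ0, hσ1, hρσ⟩ : ∃ σ : ℝ, 0 < σ ∧ σ < 1 ∧ ρ = σ * σ := by
    refine ⟨Real.sqrt ρ, Real.sqrt_pos.2 hρ0, ?_, (Real.mul_self_sqrt hρ0.le).symm⟩
    rw [show (1:ℝ) = Real.sqrt 1 by rw [Real.sqrt_one]]
    exact Real.sqrt_lt_sqrt hρ0.le hρ1
  have hlogσ : Real.log σ < 0 := Real.log_neg hσ0 hσ1
  have habsA : |Real.log A| = c₂ := by rw [abs_of_neg hlogA]
  have hnls : (0:ℝ) < -Real.log σ := by linarith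
  refine ⟨2 * c₂ / (-Real.log σ), div_pos (by linarith) hnls, fun h hh => ?_⟩
  have hh0 : 0 < h := lt_of_lt_of_le (div_pos (by linarith) hnls) hh
  have hh2 : 2 * c₂ ≤ h * (-Real.log σ) := by
    rw [div_le_iff₀ (by linarith : (0:ℝ) < -Real.log σ)] at hh
    linarith
  have hlogBne : Real.log B ≠ 0 := ne_of_lt hlogB
  have hlogBabs : 0 < |Real.log B| := abs_pos.2 hlogBne
  -- core bound for a single N
  have KB : ∀ N : ℕ, Real.exp 1 ≤ (N : ℝ) * |Real.log B| →
      P {ω | ∃ m : ℕ, zetaNH A B (fun _ => h) N ≤ (m : ℝ) ∧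
        δ < |(∑ n ∈ Finset.Icc (N + 1) (N + m), Y n ω) /
              (∑ n ∈ Finset.Icc (N + 1) (N + m), Z n ω) - EY / EZ|}
      ≤ ENNReal.ofReal (4 * (1 - σ)⁻¹) *
        ENNReal.ofReal (1 / ((N : ℝ) ^ 2 * Real.log B ^ 2)) := by
    intro N hN
    have hNx : 0 < (N : ℝ) * |Real.log B| := lt_of_lt_of_le (Real.exp_pos 1) hN
    set L : ℝ := Real.log ((N : ℝ) * |Real.log B|) with hL
    have hL1 : 1 ≤ L := (Real.le_log_iff_exp_le hNx).2 hN
    set ζ : ℝ := zetaNH A B (fun _ => h) N with hζ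
    have hζval : ζ = h * L / c₂ := by
      rw [hζ, zetaNH, habsA]
    have hζpos : 0 < ζ := by
      rw [hζval]; positivity
    -- σ ^ ceil ζ is small
    have hσζ : σ ^ ⌈ζ⌉₊ ≤ 1 / ((N : ℝ) ^ 2 * Real.log B ^ 2) := by
      have h1 : (σ : ℝ) ^ (⌈ζ⌉₊ : ℕ) = σ ^ ((⌈ζ⌉₊ : ℕ) : ℝ) := (Real.rpow_natCast σ _).symm
      have h2 : σ ^ ((⌈ζ⌉₊ : ℕ) : ℝ) ≤ σ ^ (ζ : ℝ) :=
        Real.rpow_le_rpow_of_exponent_ge hσ0 hσ1.le (Nat.le_ceil ζ)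
      have h3 : σ ^ (ζ : ℝ) = Real.exp (Real.log σ * ζ) := Real.rpow_def_of_pos hσ0 ζ
      have h4 : Real.log σ * ζ ≤ -2 * L := by
        rw [hζval]
        have hid : Real.log σ * (h * L / c₂) = -(h * (-Real.log σ) * L) / c₂ := by ring
        rw [hid, div_le_iff₀ hc₂]
        have hint2 : (2 * c₂) * L ≤ (h * (-Real.log σ)) * L :=
          mul_le_mul_of_nonneg_right hh2 (by linarith : (0:ℝ) ≤ L)
        linarith [hint2]
      have h5 : Real.exp (-2 * L) = 1 / ((N : ℝ) ^ 2 * Real.log B ^ 2) := by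
        have hx : Real.exp L = (N : ℝ) * |Real.log B| := Real.exp_log hNx
        rw [show (-2 : ℝ) * L = -(L + L) by ring, Real.exp_neg, Real.exp_add, hx, one_div]
        congr 1
        rw [show ((N:ℝ) * |Real.log B|) * ((N:ℝ) * |Real.log B|)
            = (N:ℝ)^2 * (|Real.log B| * |Real.log B|) by ring, abs_mul_abs_self]
        ring
      calc σ ^ ⌈ζ⌉₊ = σ ^ ((⌈ζ⌉₊ : ℕ) : ℝ) := h1
        _ ≤ σ ^ (ζ : ℝ) := h2
        _ = Real.exp (Real.log σ * ζ) := h3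
        _ ≤ Real.exp (-2 * L) := Real.exp_le_exp.2 h4
        _ = 1 / ((N : ℝ) ^ 2 * Real.log B ^ 2) := h5
    -- decompose the event over m
    have hsplit : {ω | ∃ m : ℕ, ζ ≤ (m : ℝ) ∧
        δ < |(∑ n ∈ Finset.Icc (N + 1) (N + m), Y n ω) /
              (∑ n ∈ Finset.Icc (N + 1) (N + m), Z n ω) - EY / EZ|}
        = ⋃ m : ℕ, {ω | ζ ≤ (m : ℝ) ∧
        δ < |(∑ n ∈ Finset.Icc (N + 1) (N + m), Y n ω) /
              (∑ n ∈ Finset.Icc (N + 1) (N + m), Z n ω) - EY / EZ|} := by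
      ext ω; simp
    have hDD : ∀ m : ℕ, P {ω | ζ ≤ (m : ℝ) ∧
        δ < |(∑ n ∈ Finset.Icc (N + 1) (N + m), Y n ω) /
              (∑ n ∈ Finset.Icc (N + 1) (N + m), Z n ω) - EY / EZ|}
        ≤ if ζ ≤ (m : ℝ) then ENNReal.ofReal (4 * (σ * σ) ^ m) else 0 := by
      intro m
      split_ifs with hcm
      · -- main Chernoff case
        have hm0 : 0 < (m : ℝ) := lt_of_lt_of_le hζpos hcm
        have hEYm : (∫ ω, Ym 1 ω ∂P) = -EY := by
          simp only [hYm]; rw [integral_neg]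
        have hEZm : (∫ ω, Zm 1 ω ∂P) = -EZ := by
          simp only [hZm]; rw [integral_neg]
        -- inclusion into the four tail events
        have hincl : {ω | ζ ≤ (m : ℝ) ∧
            δ < |(∑ n ∈ Finset.Icc (N + 1) (N + m), Y n ω) /
                  (∑ n ∈ Finset.Icc (N + 1) (N + m), Z n ω) - EY / EZ|}
            ⊆ {ω | (m : ℝ) * (EY + ε) ≤ ∑ n ∈ Finset.Icc (N + 1) (N + m), Y n ω}
              ∪ ({ω | (m : ℝ) * ((∫ ω, Ym 1 ω ∂P) + ε) ≤ ∑ n ∈ Finset.Icc (N + 1) (N + m), Ym n ω}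
              ∪ ({ω | (m : ℝ) * (EZ + ε) ≤ ∑ n ∈ Finset.Icc (N + 1) (N + m), Z n ω}
              ∪ {ω | (m : ℝ) * ((∫ ω, Zm 1 ω ∂P) + ε) ≤ ∑ n ∈ Finset.Icc (N + 1) (N + m), Zm n ω})) := by
          intro ω hω
          obtain ⟨hζm, hdev⟩ := hω
          by_contra hnot
          simp only [Set.mem_union, Set.mem_setOf_eq, not_or, not_le, hEYm, hEZm] at hnot
          obtain ⟨h1, h2, h3, h4⟩ := hnot
          have hsumYm : ∑ n ∈ Finset.Icc (N + 1) (N + m), Ym n ω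
              = -∑ n ∈ Finset.Icc (N + 1) (N + m), Y n ω := by
            simp [hYm]
          have hsumZm : ∑ n ∈ Finset.Icc (N + 1) (N + m), Zm n ω
              = -∑ n ∈ Finset.Icc (N + 1) (N + m), Z n ω := by
            simp [hZm]
          rw [hsumYm] at h2
          rw [hsumZm] at h4
          have hy : |(∑ n ∈ Finset.Icc (N + 1) (N + m), Y n ω) - (m : ℝ) * EY| < ε * m := by
            rw [abs_lt]
            constructor
            · linarith [h2]
            · linarith [h1]
          have hz : |(∑ n ∈ Finset.Icc (N + 1) (N + m), Z n ω) - (m : ℝ) * EZ| < ε * m := by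
            rw [abs_lt]
            constructor
            · linarith [h4]
            · linarith [h3]
          have hcard : (Finset.Icc (N + 1) (N + m)).card = m := by
            rw [Nat.card_Icc]; omega
          have hsz : (∑ n ∈ Finset.Icc (N + 1) (N + m), Z n ω) ≤ -(c₁ * m) := by
            calc (∑ n ∈ Finset.Icc (N + 1) (N + m), Z n ω)
                ≤ (Finset.Icc (N + 1) (N + m)).card • Real.log (B - A) :=
                  Finset.sum_le_card_nsmul _ _ _ (fun n _ => hZub n ω)
              _ = (m : ℝ) * Real.log (B - A) := by rw [hcard, nsmul_eq_mul]
              _ = -(c₁ * m) := by rw [hc₁def]; ring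
          exact absurd (dev_cases hc₁ hm0 hsz hEZub hEZlb hεle hy hz) (not_le.2 hdev)
        have hU1 := chernoff_icc P hYind hYmeas hYid hl₁ hint₁ N m (c := EY + ε)
        rw [← hr₁] at hU1
        have hU2 := chernoff_icc P hYmind hYmmeas hYmid hl₂ hint₂ N m
          (c := (∫ ω, Ym 1 ω ∂P) + ε)
        rw [← hr₂] at hU2
        have hU3 := chernoff_icc P hZind hZmeas hZid hl₃ hint₃ N m (c := EZ + ε)
        rw [← hr₃] at hU3
        have hU4 := chernoff_icc P hZmind hZmmeas hZmid hl₄ hint₄ N m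
          (c := (∫ ω, Zm 1 ω ∂P) + ε)
        rw [← hr₄] at hU4
        have hrρ : ∀ r : ℝ, 0 ≤ r → r ≤ ρ →
            ENNReal.ofReal (r ^ m) ≤ ENNReal.ofReal (ρ ^ m) := fun r h0 hr =>
          ENNReal.ofReal_le_ofReal (pow_le_pow_left₀ h0 hr m)
        have hsum4 : (4 : ℝ) * (σ * σ) ^ m = ρ ^ m + ρ ^ m + ρ ^ m + ρ ^ m := by
          rw [← hρσ]; ring
        calc P {ω | ζ ≤ (m : ℝ) ∧
            δ < |(∑ n ∈ Finset.Icc (N + 1) (N + m), Y n ω) /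
                  (∑ n ∈ Finset.Icc (N + 1) (N + m), Z n ω) - EY / EZ|}
            ≤ P ({ω | (m : ℝ) * (EY + ε) ≤ ∑ n ∈ Finset.Icc (N + 1) (N + m), Y n ω}
              ∪ ({ω | (m : ℝ) * ((∫ ω, Ym 1 ω ∂P) + ε) ≤ ∑ n ∈ Finset.Icc (N + 1) (N + m), Ym n ω}
              ∪ ({ω | (m : ℝ) * (EZ + ε) ≤ ∑ n ∈ Finset.Icc (N + 1) (N + m), Z n ω}
              ∪ {ω | (m : ℝ) * ((∫ ω, Zm 1 ω ∂P) + ε) ≤ ∑ n ∈ Finset.Icc (N + 1) (N + m), Zm n ω}))) :=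
              measure_mono hincl
          _ ≤ ENNReal.ofReal (ρ ^ m) + (ENNReal.ofReal (ρ ^ m)
              + (ENNReal.ofReal (ρ ^ m) + ENNReal.ofReal (ρ ^ m))) := by
              refine le_trans (measure_union_le _ _) ?_
              gcongr
              · exact le_trans hU1 (hrρ _ hr₁n hρr₁)
              refine le_trans (measure_union_le _ _) ?_
              gcongr
              · exact le_trans hU2 (hrρ _ hr₂n hρr₂)
              refine le_trans (measure_union_le _ _) ?_
              gcongr
              · exact le_trans hU3 (hrρ _ hr₃n hρr₃)
              · exact le_trans hU4 (hrρ _ hr₄n hρr₄)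
          _ = ENNReal.ofReal (4 * (σ * σ) ^ m) := by
              have hρm : (0:ℝ) ≤ ρ ^ m := pow_nonneg hρ0.le m
              rw [hsum4, ENNReal.ofReal_add (by linarith) (by linarith),
                ENNReal.ofReal_add (by linarith) (by linarith),
                ENNReal.ofReal_add (by linarith) (by linarith)]
              ring
      · -- impossible case
        have hsub : {ω | ζ ≤ (m : ℝ) ∧
            δ < |(∑ n ∈ Finset.Icc (N + 1) (N + m), Y n ω) /
                  (∑ n ∈ Finset.Icc (N + 1) (N + m), Z n ω) - EY / EZ|} ⊆ (∅ : Set Ω) :=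
          fun ω hω => absurd hω.1 hcm
        exact le_of_eq (measure_mono_null hsub measure_empty)
    calc P {ω | ∃ m : ℕ, ζ ≤ (m : ℝ) ∧
        δ < |(∑ n ∈ Finset.Icc (N + 1) (N + m), Y n ω) /
              (∑ n ∈ Finset.Icc (N + 1) (N + m), Z n ω) - EY / EZ|}
        = P (⋃ m : ℕ, {ω | ζ ≤ (m : ℝ) ∧
        δ < |(∑ n ∈ Finset.Icc (N + 1) (N + m), Y n ω) /
              (∑ n ∈ Finset.Icc (N + 1) (N + m), Z n ω) - EY / EZ|}) := by rw [hsplit]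
      _ ≤ ∑' m : ℕ, P {ω | ζ ≤ (m : ℝ) ∧
        δ < |(∑ n ∈ Finset.Icc (N + 1) (N + m), Y n ω) /
              (∑ n ∈ Finset.Icc (N + 1) (N + m), Z n ω) - EY / EZ|} := measure_iUnion_le _
      _ ≤ ∑' m : ℕ, (if ζ ≤ (m : ℝ) then ENNReal.ofReal (4 * (σ * σ) ^ m) else 0) :=
          ENNReal.tsum_le_tsum hDD
      _ ≤ ENNReal.ofReal (4 * σ ^ ⌈ζ⌉₊ * (1 - σ)⁻¹) := tail_geom_bound hσ0.le hσ1
      _ ≤ ENNReal.ofReal (4 * (1 - σ)⁻¹) *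
          ENNReal.ofReal (1 / ((N : ℝ) ^ 2 * Real.log B ^ 2)) := by
          have hinv : (0:ℝ) ≤ (1 - σ)⁻¹ := inv_nonneg.2 (by linarith)
          rw [← ENNReal.ofReal_mul (by linarith)]
          apply ENNReal.ofReal_le_ofReal
          calc 4 * σ ^ ⌈ζ⌉₊ * (1 - σ)⁻¹
              ≤ 4 * (1 / ((N : ℝ) ^ 2 * Real.log B ^ 2)) * (1 - σ)⁻¹ := by
                apply mul_le_mul_of_nonneg_right _ hinv
                apply mul_le_mul_of_nonneg_left hσζ (by norm_num)
            _ = 4 * (1 - σ)⁻¹ * (1 / ((N : ℝ) ^ 2 * Real.log B ^ 2)) := by ring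
  -- Borel–Cantelli assembly
  obtain ⟨N₀, hN₀⟩ : ∃ N₀ : ℕ, ∀ k : ℕ, Real.exp 1 ≤ ((N₀ + k : ℕ) : ℝ) * |Real.log B| := by
    refine ⟨Nat.ceil (Real.exp 1 / |Real.log B|) + 1, fun k => ?_⟩
    have h1 : Real.exp 1 / |Real.log B| ≤ ((Nat.ceil (Real.exp 1 / |Real.log B|) + 1 + k : ℕ) : ℝ) := by
      calc Real.exp 1 / |Real.log B| ≤ (⌈Real.exp 1 / |Real.log B|⌉₊ : ℝ) := Nat.le_ceil _
        _ ≤ ((Nat.ceil (Real.exp 1 / |Real.log B|) + 1 + k : ℕ) : ℝ) := by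
            exact Nat.cast_le.2 (by omega)
    rw [div_le_iff₀ hlogBabs] at h1
    linarith
  have hsum : Summable (fun k : ℕ => 1 / (((N₀ + k : ℕ) : ℝ) ^ 2 * Real.log B ^ 2)) := by
    have hbase : Summable (fun n : ℕ => 1 / (n : ℝ) ^ 2) := by
      have := Real.summable_one_div_nat_pow (p := 2) |>.2 one_lt_two
      exact_mod_cast this
    have h2 := (summable_nat_add_iff (f := fun n : ℕ => 1 / (n : ℝ) ^ 2) N₀).2 hbase
    have h3 : Summable (fun k : ℕ => 1 / (((N₀ + k : ℕ) : ℝ) ^ 2)) := by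
      refine h2.congr fun k => ?_
      norm_num [add_comm]
    refine (h3.mul_right (1 / Real.log B ^ 2)).congr fun k => ?_
    rw [div_mul_div_comm, one_mul]
  have hnn : ∀ k : ℕ, (0:ℝ) ≤ 1 / (((N₀ + k : ℕ) : ℝ) ^ 2 * Real.log B ^ 2) := by
    intro k; positivity
  have hfin : ∑' k : ℕ, P {ω | ∃ m : ℕ, zetaNH A B (fun _ => h) (N₀ + k) ≤ (m : ℝ) ∧
      δ < |(∑ n ∈ Finset.Icc ((N₀ + k) + 1) ((N₀ + k) + m), Y n ω) /
            (∑ n ∈ Finset.Icc ((N₀ + k) + 1) ((N₀ + k) + m), Z n ω) - EY / EZ|} ≠ ⊤ := by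
    refine ne_top_of_le_ne_top (b := ENNReal.ofReal (4 * (1 - σ)⁻¹) *
      ∑' k : ℕ, ENNReal.ofReal (1 / (((N₀ + k : ℕ) : ℝ) ^ 2 * Real.log B ^ 2))) ?_ ?_
    · exact ENNReal.mul_ne_top ENNReal.ofReal_ne_top
        (by rw [← ENNReal.ofReal_tsum_of_nonneg hnn hsum]; exact ENNReal.ofReal_ne_top)
    · calc ∑' k : ℕ, P {ω | ∃ m : ℕ, zetaNH A B (fun _ => h) (N₀ + k) ≤ (m : ℝ) ∧
          δ < |(∑ n ∈ Finset.Icc ((N₀ + k) + 1) ((N₀ + k) + m), Y n ω) /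
                (∑ n ∈ Finset.Icc ((N₀ + k) + 1) ((N₀ + k) + m), Z n ω) - EY / EZ|}
          ≤ ∑' k : ℕ, ENNReal.ofReal (4 * (1 - σ)⁻¹) *
              ENNReal.ofReal (1 / (((N₀ + k : ℕ) : ℝ) ^ 2 * Real.log B ^ 2)) :=
            ENNReal.tsum_le_tsum (fun k => KB (N₀ + k) (hN₀ k))
        _ = ENNReal.ofReal (4 * (1 - σ)⁻¹) *
            ∑' k : ℕ, ENNReal.ofReal (1 / (((N₀ + k : ℕ) : ℝ) ^ 2 * Real.log B ^ 2)) :=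
            ENNReal.tsum_mul_left
  have hBC := measure_limsup_atTop_eq_zero hfin
  refine le_antisymm ?_ (zero_le)
  calc P {ω | {N : ℕ | ∃ m : ℕ, zetaNH A B (fun _ => h) N ≤ (m : ℝ) ∧
        δ < |(∑ n ∈ Finset.Icc (N + 1) (N + m), Y n ω) /
              (∑ n ∈ Finset.Icc (N + 1) (N + m), Z n ω) - EY / EZ|}.Infinite}
      ≤ P (limsup (fun k : ℕ => {ω | ∃ m : ℕ, zetaNH A B (fun _ => h) (N₀ + k) ≤ (m : ℝ) ∧
        δ < |(∑ n ∈ Finset.Icc ((N₀ + k) + 1) ((N₀ + k) + m), Y n ω) /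
              (∑ n ∈ Finset.Icc ((N₀ + k) + 1) ((N₀ + k) + m), Z n ω) - EY / EZ|}) atTop) := by
        apply measure_mono
        intro ω hω
        rw [mem_limsup_iff_frequently_mem, Filter.frequently_atTop]
        intro K
        obtain ⟨N, hNm, hNgt⟩ := hω.exists_gt (N₀ + K)
        refine ⟨N - N₀, by omega, ?_⟩
        have hNN : N₀ + (N - N₀) = N := by omega
        rw [hNN]
        exact hNm
    _ = 0 := hBC




variable {Ω : Type*} [MeasurableSpace Ω] (P : Measure Ω) [IsProbabilityMeasure P]

lemma indep_triple (X : ℕ → Ω → ℝ × ℝ) (q : ℕ → Ω → ℝ)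
    (hXm : ∀ n, Measurable (X n)) (hqm : ∀ n, Measurable (q n))
    (hXind : iIndepFun X P)
    (hqind : iIndepFun q P)
    (hindep : IndepFun (fun ω (n : ℕ) => X n ω) (fun ω (n : ℕ) => q n ω) P) :
    iIndepFun (fun n ω => (X n ω, q n ω)) P := by
  classical
  rw [iIndepFun_iff_iIndep]
  set pis : ℕ → Set (Set Ω) := fun i =>
    {s | ∃ u : Set (ℝ × ℝ), ∃ v : Set ℝ, MeasurableSet u ∧ MeasurableSet v ∧
      s = X i ⁻¹' u ∩ q i ⁻¹' v} with hpis
  refine iIndepSets.iIndep ?_ pis ?_ ?_ ?_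
  · exact fun i => Measurable.comap_le ((hXm i).prodMk (hqm i))
  · intro i s1 hs1 s2 hs2 _
    obtain ⟨u1, v1, hu1, hv1, rfl⟩ := hs1
    obtain ⟨u2, v2, hu2, hv2, rfl⟩ := hs2
    refine ⟨u1 ∩ u2, v1 ∩ v2, hu1.inter hu2, hv1.inter hv2, ?_⟩
    ext ω
    simp only [Set.mem_inter_iff, Set.mem_preimage]
    tauto
  · intro i
    have h1 : MeasurableSpace.comap (fun ω => (X i ω, q i ω)) Prod.instMeasurableSpace =
        MeasurableSpace.generateFrom
          ((fun S => (fun ω => (X i ω, q i ω)) ⁻¹' S) ''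
            (image2 (· ×ˢ ·) {s : Set (ℝ × ℝ) | MeasurableSet s} {t : Set ℝ | MeasurableSet t})) := by
      rw [← generateFrom_prod, MeasurableSpace.comap_generateFrom]
    rw [h1]
    congr 1
    ext S
    constructor
    · rintro ⟨T, ⟨u, hu, v, hv, rfl⟩, rfl⟩
      exact ⟨u, v, hu, hv, (Set.mk_preimage_prod _ _).symm⟩
    · rintro ⟨u, v, hu, hv, rfl⟩
      exact ⟨u ×ˢ v, ⟨u, hu, v, hv, rfl⟩, Set.mk_preimage_prod _ _⟩
  · rw [iIndepSets_iff]
    intro s f hf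
    choose! u v hu hv hfeq using hf
    have hXq : ∀ i : ℕ, IndepFun (X i) (q i) P :=
      fun i => hindep.comp (measurable_pi_apply i) (measurable_pi_apply i)
    have hA : MeasurableSet ((s : Set ℕ).pi u) :=
      MeasurableSet.pi s.countable_toSet (fun i hi => hu i hi)
    have hB : MeasurableSet ((s : Set ℕ).pi v) :=
      MeasurableSet.pi s.countable_toSet (fun i hi => hv i hi)
    have hpreA : (fun ω (n : ℕ) => X n ω) ⁻¹' ((s : Set ℕ).pi u) = ⋂ i ∈ s, X i ⁻¹' u i := by
      ext ω; simp [Set.mem_pi]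
    have hpreB : (fun ω (n : ℕ) => q n ω) ⁻¹' ((s : Set ℕ).pi v) = ⋂ i ∈ s, q i ⁻¹' v i := by
      ext ω; simp [Set.mem_pi]
    calc P (⋂ i ∈ s, f i)
        = P ((⋂ i ∈ s, X i ⁻¹' u i) ∩ ⋂ i ∈ s, q i ⁻¹' v i) := by
          congr 1
          ext ω
          simp only [Set.mem_iInter, Set.mem_inter_iff]
          constructor
          · intro hω
            refine ⟨fun i hi => ?_, fun i hi => ?_⟩
            · have h := hω i hi; rw [hfeq i hi] at h; exact h.1
            · have h := hω i hi; rw [hfeq i hi] at h; exact h.2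
          · rintro ⟨h1, h2⟩ i hi
            rw [hfeq i hi]
            exact ⟨h1 i hi, h2 i hi⟩
      _ = P (⋂ i ∈ s, X i ⁻¹' u i) * P (⋂ i ∈ s, q i ⁻¹' v i) := by
          rw [← hpreA, ← hpreB]
          exact hindep.measure_inter_preimage_eq_mul _ _ hA hB
      _ = (∏ i ∈ s, P (X i ⁻¹' u i)) * ∏ i ∈ s, P (q i ⁻¹' v i) := by
          rw [hXind.measure_inter_preimage_eq_mul s (fun i hi => hu i hi),
            hqind.measure_inter_preimage_eq_mul s (fun i hi => hv i hi)]
      _ = ∏ i ∈ s, P (X i ⁻¹' u i) * P (q i ⁻¹' v i) := Finset.prod_mul_distrib.symm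
      _ = ∏ i ∈ s, P (f i) := by
          refine Finset.prod_congr rfl fun i hi => ?_
          rw [hfeq i hi]
          exact ((hXq i).measure_inter_preimage_eq_mul _ _ (hu i hi) (hv i hi)).symm

lemma identdistrib_triple (X : ℕ → Ω → ℝ × ℝ) (q : ℕ → Ω → ℝ)
    (hXm : ∀ n, Measurable (X n)) (hqm : ∀ n, Measurable (q n))
    (hXid : ∀ n, IdentDistrib (X n) (X 1) P P) (hqid : ∀ n, IdentDistrib (q n) (q 1) P P)
    (hindep : IndepFun (fun ω (n : ℕ) => X n ω) (fun ω (n : ℕ) => q n ω) P) :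
    ∀ n, IdentDistrib (fun ω => (X n ω, q n ω)) (fun ω => (X 1 ω, q 1 ω)) P P := by
  intro n
  have hXq : ∀ i : ℕ, IndepFun (X i) (q i) P :=
    fun i => hindep.comp (measurable_pi_apply i) (measurable_pi_apply i)
  refine ⟨((hXm n).prodMk (hqm n)).aemeasurable, ((hXm 1).prodMk (hqm 1)).aemeasurable, ?_⟩
  rw [(indepFun_iff_map_prod_eq_prod_map_map (hXm n).aemeasurable (hqm n).aemeasurable).1 (hXq n),
    (indepFun_iff_map_prod_eq_prod_map_map (hXm 1).aemeasurable (hqm 1).aemeasurable).1 (hXq 1),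
    (hXid n).map_eq, (hqid n).map_eq]


/-- selector functions for the random variables -/
def gYsel (θ : ℝ) : (ℝ × ℝ) × ℝ → ℝ := fun w =>
  if w.2 ≤ w.1.1 ^ θ / (w.1.1 ^ θ + w.1.2 ^ θ) then Real.log w.2 else Real.log (1 - w.2)

def gZsel (θ : ℝ) : (ℝ × ℝ) × ℝ → ℝ := fun w =>
  if w.2 ≤ w.1.1 ^ θ / (w.1.1 ^ θ + w.1.2 ^ θ) then Real.log w.1.1 else Real.log w.1.2

def gYsel' (θ : ℝ) : (ℝ × ℝ) × ℝ → ℝ := fun w =>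
  if w.1.1 ^ θ / (w.1.1 ^ θ + w.1.2 ^ θ) ≤ w.2 then Real.log w.2 else Real.log (1 - w.2)

def gZsel' (θ : ℝ) : (ℝ × ℝ) × ℝ → ℝ := fun w =>
  if w.1.1 ^ θ / (w.1.1 ^ θ + w.1.2 ^ θ) ≤ w.2 then Real.log w.1.1 else Real.log w.1.2

lemma measurable_ratio (θ : ℝ) :
    Measurable (fun w : (ℝ × ℝ) × ℝ => w.1.1 ^ θ / (w.1.1 ^ θ + w.1.2 ^ θ)) := by
  fun_prop

lemma measurable_gYsel (θ : ℝ) : Measurable (gYsel θ) := by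
  unfold gYsel
  exact Measurable.ite (measurableSet_le measurable_snd (measurable_ratio θ))
    (Real.measurable_log.comp measurable_snd)
    (Real.measurable_log.comp (measurable_const.sub measurable_snd))

lemma measurable_gZsel (θ : ℝ) : Measurable (gZsel θ) := by
  unfold gZsel
  exact Measurable.ite (measurableSet_le measurable_snd (measurable_ratio θ))
    (Real.measurable_log.comp (measurable_fst.fst))
    (Real.measurable_log.comp (measurable_fst.snd))

lemma measurable_gYsel' (θ : ℝ) : Measurable (gYsel' θ) := by
  unfold gYsel'
  exact Measurable.ite (measurableSet_le (measurable_ratio θ) measurable_snd)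
    (Real.measurable_log.comp measurable_snd)
    (Real.measurable_log.comp (measurable_const.sub measurable_snd))

lemma measurable_gZsel' (θ : ℝ) : Measurable (gZsel' θ) := by
  unfold gZsel'
  exact Measurable.ite (measurableSet_le (measurable_ratio θ) measurable_snd)
    (Real.measurable_log.comp (measurable_fst.fst))
    (Real.measurable_log.comp (measurable_fst.snd))

end AuxProbResult

/-- Lemma 5, Probabilistic Result: for fixed `θ ≥ 0`, `δ > 0` there
is `h₀ > 0` such that for any constant function `H ≥ h₀`, almost surely only finitely
many `N` admit an `m ≥ ζ_N^H` for which the ratio of partial sums of the `Yₙ(θ)` and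
`Zₙ(θ)` deviates from `E(Y₁(θ))/E(Z₁(θ))` by more than `δ`; similarly for the primed
variables. -/
theorem probabilistic_result {Ω : Type*} [MeasurableSpace Ω] (P : Measure Ω) [IsProbabilityMeasure P]
    (A B : ℝ) (hA : 0 < A) (hAB : A < B) (hB1 : B < 1)
    (S : MoranSystem Ω P A B)
    (θ δ : ℝ) (hθ : 0 ≤ θ) (hδ : 0 < δ) :
    ∃ h₀ > (0:ℝ), ∀ h : ℝ, h₀ ≤ h →
      P {ω | {N : ℕ | ∃ m : ℕ, zetaNH A B (fun _ => h) N ≤ (m : ℝ) ∧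
        δ < |(∑ n ∈ Finset.Icc (N + 1) (N + m), Yrv S.a S.b S.p θ n ω) /
              (∑ n ∈ Finset.Icc (N + 1) (N + m), Zrv S.a S.b S.p θ n ω) -
            Gfn P S.a S.b S.p θ|}.Infinite} = 0 ∧
      P {ω | {N : ℕ | ∃ m : ℕ, zetaNH A B (fun _ => h) N ≤ (m : ℝ) ∧
        δ < |(∑ n ∈ Finset.Icc (N + 1) (N + m), Yrv' S.a S.b S.p θ n ω) /
              (∑ n ∈ Finset.Icc (N + 1) (N + m), Zrv' S.a S.b S.p θ n ω) -
            Gfn' P S.a S.b S.p θ|}.Infinite} = 0 := by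
  classical
  obtain ⟨t, ht0, hia, hib, hip, hi1p⟩ := S.moment
  -- joint independence and identical distribution of the triples
  have hW : iIndepFun
      (fun n ω => ((S.a ω n, S.b ω n), S.p ω n)) P :=
    indep_triple P (fun n ω => (S.a ω n, S.b ω n)) (fun n ω => S.p ω n)
      S.meas_ab S.meas_p S.indep_ab S.indep_p S.indep_ab_p
  have hWid : ∀ n, IdentDistrib (fun ω => ((S.a ω n, S.b ω n), S.p ω n))
      (fun ω => ((S.a ω 1, S.b ω 1), S.p ω 1)) P P :=
    identdistrib_triple P (fun n ω => (S.a ω n, S.b ω n)) (fun n ω => S.p ω n)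
      S.meas_ab S.meas_p S.ident_ab S.ident_p S.indep_ab_p
  have hWm : ∀ n, Measurable (fun ω => ((S.a ω n, S.b ω n), S.p ω n)) :=
    fun n => (S.meas_ab n).prodMk (S.meas_p n)
  -- transfer to Y, Z, Y', Z'
  have hYind : iIndepFun (Yrv S.a S.b S.p θ) P :=
    hW.comp (fun _ => gYsel θ) (fun _ => measurable_gYsel θ)
  have hZind : iIndepFun (Zrv S.a S.b S.p θ) P :=
    hW.comp (fun _ => gZsel θ) (fun _ => measurable_gZsel θ)
  have hYind' : iIndepFun (Yrv' S.a S.b S.p θ) P :=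
    hW.comp (fun _ => gYsel' θ) (fun _ => measurable_gYsel' θ)
  have hZind' : iIndepFun (Zrv' S.a S.b S.p θ) P :=
    hW.comp (fun _ => gZsel' θ) (fun _ => measurable_gZsel' θ)
  have hYid : ∀ n, IdentDistrib (Yrv S.a S.b S.p θ n) (Yrv S.a S.b S.p θ 1) P P :=
    fun n => (hWid n).comp (measurable_gYsel θ)
  have hZid : ∀ n, IdentDistrib (Zrv S.a S.b S.p θ n) (Zrv S.a S.b S.p θ 1) P P :=
    fun n => (hWid n).comp (measurable_gZsel θ)
  have hYid' : ∀ n, IdentDistrib (Yrv' S.a S.b S.p θ n) (Yrv' S.a S.b S.p θ 1) P P :=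
    fun n => (hWid n).comp (measurable_gYsel' θ)
  have hZid' : ∀ n, IdentDistrib (Zrv' S.a S.b S.p θ n) (Zrv' S.a S.b S.p θ 1) P P :=
    fun n => (hWid n).comp (measurable_gZsel' θ)
  have hYmeas : ∀ n, Measurable (Yrv S.a S.b S.p θ n) :=
    fun n => (measurable_gYsel θ).comp (hWm n)
  have hZmeas : ∀ n, Measurable (Zrv S.a S.b S.p θ n) :=
    fun n => (measurable_gZsel θ).comp (hWm n)
  have hYmeas' : ∀ n, Measurable (Yrv' S.a S.b S.p θ n) :=
    fun n => (measurable_gYsel' θ).comp (hWm n)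
  have hZmeas' : ∀ n, Measurable (Zrv' S.a S.b S.p θ n) :=
    fun n => (measurable_gZsel' θ).comp (hWm n)
  -- pointwise bounds
  have hYnp : ∀ n ω, Yrv S.a S.b S.p θ n ω ≤ 0 := by
    intro n ω
    obtain ⟨hp0, hp1⟩ := S.range_p ω n
    unfold Yrv
    split_ifs
    · exact Real.log_nonpos hp0 hp1
    · exact Real.log_nonpos (by linarith) (by linarith)
  have hYnp' : ∀ n ω, Yrv' S.a S.b S.p θ n ω ≤ 0 := by
    intro n ω
    obtain ⟨hp0, hp1⟩ := S.range_p ω n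
    unfold Yrv'
    split_ifs
    · exact Real.log_nonpos hp0 hp1
    · exact Real.log_nonpos (by linarith) (by linarith)
  have hab : ∀ n ω, A ≤ S.a ω n ∧ A ≤ S.b ω n ∧ S.a ω n + S.b ω n ≤ B := by
    intro n ω
    obtain ⟨hmin, hsum⟩ := S.range_ab ω n
    exact ⟨le_trans hmin (min_le_left _ _), le_trans hmin (min_le_right _ _), hsum⟩
  have hZub : ∀ n ω, Zrv S.a S.b S.p θ n ω ≤ Real.log (B - A) := by
    intro n ω
    obtain ⟨ha, hb, hs⟩ := hab n ω
    unfold Zrv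
    split_ifs
    · exact Real.log_le_log (lt_of_lt_of_le hA ha) (by linarith)
    · exact Real.log_le_log (lt_of_lt_of_le hA hb) (by linarith)
  have hZlb : ∀ n ω, Real.log A ≤ Zrv S.a S.b S.p θ n ω := by
    intro n ω
    obtain ⟨ha, hb, hs⟩ := hab n ω
    unfold Zrv
    split_ifs
    · exact Real.log_le_log hA ha
    · exact Real.log_le_log hA hb
  have hZub' : ∀ n ω, Zrv' S.a S.b S.p θ n ω ≤ Real.log (B - A) := by
    intro n ω
    obtain ⟨ha, hb, hs⟩ := hab n ω
    unfold Zrv'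
    split_ifs
    · exact Real.log_le_log (lt_of_lt_of_le hA ha) (by linarith)
    · exact Real.log_le_log (lt_of_lt_of_le hA hb) (by linarith)
  have hZlb' : ∀ n ω, Real.log A ≤ Zrv' S.a S.b S.p θ n ω := by
    intro n ω
    obtain ⟨ha, hb, hs⟩ := hab n ω
    unfold Zrv'
    split_ifs
    · exact Real.log_le_log hA ha
    · exact Real.log_le_log hA hb
  -- exponential moment for -Y
  have hkey : ∀ ω, ∀ x : ℝ, (x = Real.log (S.p ω 1) ∨ x = Real.log (1 - S.p ω 1)) →
      Real.exp (t * -x) ≤ 1 + S.p ω 1 ^ (-t) + (1 - S.p ω 1) ^ (-t) := by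
    intro ω x hx
    obtain ⟨hp0, hp1⟩ := S.range_p ω 1
    have hb1 : (0:ℝ) ≤ S.p ω 1 ^ (-t) := Real.rpow_nonneg hp0 _
    have hb2 : (0:ℝ) ≤ (1 - S.p ω 1) ^ (-t) := Real.rpow_nonneg (by linarith) _
    rcases hx with rfl | rfl
    · rcases eq_or_lt_of_le hp0 with h0 | h0
      · rw [← h0, Real.log_zero, Real.zero_rpow (neg_ne_zero.2 (ne_of_gt ht0)), sub_zero,
          Real.one_rpow]
        norm_num
      · have hq : Real.exp (t * -Real.log (S.p ω 1)) = S.p ω 1 ^ (-t) := by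
          rw [Real.rpow_def_of_pos h0]; congr 1; ring
        rw [hq]; linarith
    · rcases eq_or_lt_of_le (by linarith : (0:ℝ) ≤ 1 - S.p ω 1) with h0 | h0
      · rw [← h0, Real.log_zero]
        have hp1' : S.p ω 1 = 1 := by linarith
        rw [hp1', Real.one_rpow, Real.zero_rpow (neg_ne_zero.2 (ne_of_gt ht0))]
        norm_num
      · have hq : Real.exp (t * -Real.log (1 - S.p ω 1)) = (1 - S.p ω 1) ^ (-t) := by
          rw [Real.rpow_def_of_pos h0]; congr 1; ring
        rw [hq]; linarith
  have hbint : Integrable (fun ω => 1 + S.p ω 1 ^ (-t) + (1 - S.p ω 1) ^ (-t)) P :=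
    ((integrable_const 1).add hip).add hi1p
  have hmomY : Integrable (fun ω => Real.exp (t * -(Yrv S.a S.b S.p θ 1 ω))) P := by
    refine Integrable.mono' hbint
      (((hYmeas 1).neg.const_mul t).exp).aestronglyMeasurable (ae_of_all _ fun ω => ?_)
    rw [Real.norm_eq_abs, abs_of_pos (Real.exp_pos _)]
    refine hkey ω _ ?_
    unfold Yrv
    split_ifs
    · exact Or.inl rfl
    · exact Or.inr rfl
  have hmomY' : Integrable (fun ω => Real.exp (t * -(Yrv' S.a S.b S.p θ 1 ω))) P := by
    refine Integrable.mono' hbint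
      (((hYmeas' 1).neg.const_mul t).exp).aestronglyMeasurable (ae_of_all _ fun ω => ?_)
    rw [Real.norm_eq_abs, abs_of_pos (Real.exp_pos _)]
    refine hkey ω _ ?_
    unfold Yrv'
    split_ifs
    · exact Or.inl rfl
    · exact Or.inr rfl
  -- apply the master lemma twice
  obtain ⟨h₁, hh₁, H₁⟩ := master P A B hA hAB hB1 (Yrv S.a S.b S.p θ) (Zrv S.a S.b S.p θ)
    hYind hZind hYmeas hZmeas hYid hZid hYnp hZub hZlb ⟨t, ht0, hmomY⟩ δ hδ
  obtain ⟨h₂, hh₂, H₂⟩ := master P A B hA hAB hB1 (Yrv' S.a S.b S.p θ) (Zrv' S.a S.b S.p θ)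
    hYind' hZind' hYmeas' hZmeas' hYid' hZid' hYnp' hZub' hZlb' ⟨t, ht0, hmomY'⟩ δ hδ
  refine ⟨max h₁ h₂, lt_max_iff.2 (Or.inl hh₁), fun h hh => ⟨?_, ?_⟩⟩
  · exact H₁ h (le_trans (le_max_left _ _) hh)
  · exact H₂ h (le_trans (le_max_right _ _) hh)

end
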